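/- Let μ be a measure on (0,∞) with ∫ min{r,1} μ(dr) < ∞ and define the Bernstein function f(λ) = ∫_{(0,∞)} (1 − e^{−λ r}) μ(dr) for λ ≥ 0. If there exist c > 0 and ρ ∈ (0,1) such that μ(B) ≥ c ∫_B r^{−1−ρ} dr for every Borel set B ⊆ (0,1), then liminf_{λ→∞} f(λ)/λ^ρ > 0. -/

import Mathlib

open MeasureTheory Filter Set
open scoped ENNReal Topology

noncomputable section

/-- **Lemma 5.1(i).** If the Lévy measure `μ` of the Bernstein function
`f(λ) = ∫ (1 - e^{-λr}) μ(dr)` dominates `c r^{-1-ρ} dr` on `(0,1)` for some `ρ ∈ (0,1)`,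
then `liminf_{λ→∞} f(λ)/λ^ρ > 0`. -/
theorem bernstein_lower_bound
    (μ : Measure ℝ) (hμsupp : μ (Set.Iic 0) = 0)
    (hμint : (∫⁻ r, ENNReal.ofReal (min r 1) ∂μ) < ∞)
    (c ρ : ℝ) (hc : 0 < c) (hρ : ρ ∈ Set.Ioo (0:ℝ) 1)
    (hdom : ∀ B : Set ℝ, MeasurableSet B → B ⊆ Set.Ioo (0:ℝ) 1 →
      ENNReal.ofReal c * (∫⁻ r in B, ENNReal.ofReal (r ^ (-1 - ρ))) ≤ μ B) :
    ∃ ε > 0, ∀ᶠ l in Filter.atTop,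
      ε ≤ (∫ r, (1 - Real.exp (-(l * r))) ∂μ) / l ^ ρ := by
  obtain ⟨hρ0, hρ1⟩ := hρ
  have hexp1 : (0:ℝ) < 1 - Real.exp (-1) := by
    have : Real.exp (-1) < 1 := Real.exp_lt_one_iff.2 (by norm_num)
    linarith
  refine ⟨(1 - Real.exp (-1)) * c / (2 * ρ), by positivity, ?_⟩
  filter_upwards [Filter.eventually_ge_atTop ((2:ℝ) ^ (1/ρ))] with l hl
  -- basic facts about l
  have h2ρ : (2:ℝ) ≤ (2:ℝ) ^ (1/ρ) := by
    calc (2:ℝ) = (2:ℝ) ^ (1:ℝ) := by simp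
    _ ≤ (2:ℝ) ^ (1/ρ) := by
        apply Real.rpow_le_rpow_of_exponent_le (by norm_num)
        rw [le_div_iff₀ hρ0]; linarith
  have hl2 : (2:ℝ) ≤ l := le_trans h2ρ hl
  have hl0 : (0:ℝ) < l := by linarith
  have hl1 : (1:ℝ) < l := by linarith
  have hlρ2 : (2:ℝ) ≤ l ^ ρ := by
    calc (2:ℝ) = ((2:ℝ) ^ (1/ρ)) ^ ρ := by
          rw [← Real.rpow_mul (by norm_num), one_div_mul_cancel hρ0.ne', Real.rpow_one]
    _ ≤ l ^ ρ := Real.rpow_le_rpow (by positivity) hl hρ0.le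
  have hlρ0 : (0:ℝ) < l ^ ρ := Real.rpow_pos_of_pos hl0 _
  have hinvl : (0:ℝ) < 1 / l := by positivity
  have hinvl1 : 1 / l < 1 := by rw [div_lt_one hl0]; exact hl1
  set S : Set ℝ := Set.Ioo (1/l) 1 with hSdef
  have hSsub : S ⊆ Set.Ioo (0:ℝ) 1 := fun r hr => ⟨lt_trans hinvl hr.1, hr.2⟩
  -- a.e. positivity
  have hae : ∀ᵐ r ∂μ, 0 < r := by
    rw [ae_iff]
    have : {r : ℝ | ¬ 0 < r} = Set.Iic 0 := by ext r; simp [not_lt]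
    rw [this]; exact hμsupp
  -- μ S is finite
  have hμS_lt : μ S < ∞ := by
    have h1 : μ S = ∫⁻ _ in S, 1 ∂μ := (setLIntegral_one S).symm
    have h2 : ∫⁻ r in S, (1:ℝ≥0∞) ∂μ
        ≤ ∫⁻ r in S, ENNReal.ofReal l * ENNReal.ofReal (min r 1) ∂μ := by
      refine setLIntegral_mono ((ENNReal.measurable_ofReal.comp (measurable_id.min measurable_const)).const_mul _) (fun r hr => ?_)
      have hr1 : min r 1 = r := min_eq_left hr.2.le
      rw [hr1, ← ENNReal.ofReal_mul hl0.le, ← ENNReal.ofReal_one]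
      apply ENNReal.ofReal_le_ofReal
      calc (1:ℝ) = l * (1/l) := by field_simp
      _ ≤ l * r := by nlinarith [hr.1]
    have h3 : ∫⁻ r in S, ENNReal.ofReal l * ENNReal.ofReal (min r 1) ∂μ
        = ENNReal.ofReal l * ∫⁻ r in S, ENNReal.ofReal (min r 1) ∂μ :=
      lintegral_const_mul' _ _ ENNReal.ofReal_ne_top
    have h4 : ∫⁻ r in S, ENNReal.ofReal (min r 1) ∂μ
        ≤ ∫⁻ r, ENNReal.ofReal (min r 1) ∂μ := setLIntegral_le_lintegral _ _
    calc μ S ≤ ENNReal.ofReal l * ∫⁻ r, ENNReal.ofReal (min r 1) ∂μ := by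
          rw [h1]; exact le_trans h2 (h3 ▸ mul_le_mul_right h4 _)
    _ < ∞ := ENNReal.mul_lt_top ENNReal.ofReal_lt_top hμint
  -- lower bound on μ S via hdom and the explicit integral of r^(-1-ρ)
  have hrint : IntegrableOn (fun r : ℝ => r ^ (-1 - ρ)) S := by
    refine (ContinuousOn.integrableOn_Icc ?_).mono_set Set.Ioo_subset_Icc_self
    intro x hx
    exact (Real.continuousAt_rpow_const x (-1-ρ)
      (Or.inl (ne_of_gt (lt_of_lt_of_le hinvl hx.1)))).continuousWithinAt
  have hcomp : (∫ r in S, r ^ (-1 - ρ)) = (l ^ ρ - 1) / ρ := by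
    rw [hSdef, ← MeasureTheory.integral_Ioc_eq_integral_Ioo,
      ← intervalIntegral.integral_of_le hinvl1.le]
    rw [integral_rpow (Or.inr ⟨fun h => hρ0.ne' (by linarith),
      by rw [Set.uIcc_of_le hinvl1.le]; exact fun h => absurd h.1 (not_le.2 hinvl)⟩)]
    have h1 : (-1 - ρ + 1 : ℝ) = -ρ := by ring
    rw [h1, Real.one_rpow, one_div, Real.inv_rpow hl0.le, Real.rpow_neg hl0.le, inv_inv]
    rw [div_neg, ← neg_div, neg_sub]
  have hlint : (∫⁻ r in S, ENNReal.ofReal (r ^ (-1 - ρ)))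
      = ENNReal.ofReal ((l ^ ρ - 1) / ρ) := by
    rw [← MeasureTheory.ofReal_integral_eq_lintegral_ofReal hrint ?_, hcomp]
    refine (ae_restrict_iff' measurableSet_Ioo).2 (ae_of_all _ fun r hr => ?_)
    exact Real.rpow_nonneg (hinvl.trans hr.1).le _
  have hμS_ge : ENNReal.ofReal (c * ((l ^ ρ - 1) / ρ)) ≤ μ S := by
    have := hdom S measurableSet_Ioo hSsub
    rwa [hlint, ← ENNReal.ofReal_mul hc.le] at this
  have hμS_ge' : c * ((l ^ ρ - 1) / ρ) ≤ (μ S).toReal :=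
    (ENNReal.ofReal_le_iff_le_toReal hμS_lt.ne).1 hμS_ge
  -- integrability of g
  set g : ℝ → ℝ := fun r => 1 - Real.exp (-(l * r)) with hgdef
  have hg_int : Integrable g μ := by
    refine ⟨(Continuous.sub continuous_const
      ((Real.continuous_exp).comp ((continuous_const.mul continuous_id).neg))).aestronglyMeasurable, ?_⟩
    rw [hasFiniteIntegral_iff_norm]
    have hb : ∀ᵐ r ∂μ, ENNReal.ofReal ‖g r‖ ≤ ENNReal.ofReal l * ENNReal.ofReal (min r 1) := by
      filter_upwards [hae] with r hr
      have hg0 : 0 ≤ g r := by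
        have : Real.exp (-(l * r)) ≤ 1 := Real.exp_le_one_iff.2 (by nlinarith)
        simp only [hgdef]; linarith
      have hgle : g r ≤ l * min r 1 := by
        rcases le_or_gt r 1 with h | h
        · have h1 : 1 - l * r ≤ Real.exp (-(l * r)) := by
            have := Real.add_one_le_exp (-(l * r)); linarith
          simp only [hgdef, min_eq_left h]; linarith
        · have h1 : Real.exp (-(l * r)) ≥ 0 := (Real.exp_pos _).le
          have h2 : min r 1 = 1 := min_eq_right h.le
          simp only [hgdef, h2]; nlinarith
      calc ENNReal.ofReal ‖g r‖ = ENNReal.ofReal (g r) := by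
            rw [Real.norm_of_nonneg hg0]
      _ ≤ ENNReal.ofReal (l * min r 1) := ENNReal.ofReal_le_ofReal hgle
      _ = ENNReal.ofReal l * ENNReal.ofReal (min r 1) := ENNReal.ofReal_mul hl0.le
    calc ∫⁻ r, ENNReal.ofReal ‖g r‖ ∂μ
        ≤ ∫⁻ r, ENNReal.ofReal l * ENNReal.ofReal (min r 1) ∂μ := lintegral_mono_ae hb
    _ = ENNReal.ofReal l * ∫⁻ r, ENNReal.ofReal (min r 1) ∂μ :=
        lintegral_const_mul' _ _ ENNReal.ofReal_ne_top
    _ < ∞ := ENNReal.mul_lt_top ENNReal.ofReal_lt_top hμint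
  -- minorant
  set h : ℝ → ℝ := S.indicator (fun _ => 1 - Real.exp (-1)) with hhdef
  have hh_int : Integrable h μ :=
    (integrable_indicator_iff measurableSet_Ioo).2
      (integrableOn_const hμS_lt.ne)
  have hh_le : h ≤ᵐ[μ] g := by
    filter_upwards [hae] with r hr
    by_cases hrS : r ∈ S
    · have h1 : (1:ℝ) ≤ l * r := by
        calc (1:ℝ) = l * (1/l) := by field_simp
        _ ≤ l * r := by nlinarith [hrS.1]
      have h2 : Real.exp (-(l * r)) ≤ Real.exp (-1) := Real.exp_le_exp.2 (by linarith)
      simp only [hhdef, hgdef, Set.indicator_of_mem hrS]; linarith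
    · have : Real.exp (-(l * r)) ≤ 1 := Real.exp_le_one_iff.2 (by nlinarith)
      simp only [hhdef, hgdef, Set.indicator_of_notMem hrS]; linarith
  have hint_h : ∫ r, h r ∂μ = (μ S).toReal * (1 - Real.exp (-1)) := by
    rw [hhdef, integral_indicator_const _ measurableSet_Ioo, smul_eq_mul, measureReal_def]
  have hge : (μ S).toReal * (1 - Real.exp (-1)) ≤ ∫ r, g r ∂μ := by
    rw [← hint_h]; exact integral_mono_ae hh_int hg_int hh_le
  -- conclude
  rw [le_div_iff₀ hlρ0]
  have key : (1 - Real.exp (-1)) * c / (2 * ρ) * l ^ ρ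
      ≤ (μ S).toReal * (1 - Real.exp (-1)) := by
    have h1 : c * (l ^ ρ / (2 * ρ)) ≤ c * ((l ^ ρ - 1) / ρ) := by
      apply mul_le_mul_of_nonneg_left _ hc.le
      rw [div_le_div_iff₀ (by positivity) hρ0]
      linarith [mul_le_mul_of_nonneg_left hlρ2 hρ0.le]
    have h2 : c * (l ^ ρ / (2 * ρ)) ≤ (μ S).toReal := le_trans h1 hμS_ge'
    calc (1 - Real.exp (-1)) * c / (2 * ρ) * l ^ ρ
        = (1 - Real.exp (-1)) * (c * (l ^ ρ / (2 * ρ))) := by ring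
    _ ≤ (1 - Real.exp (-1)) * (μ S).toReal :=
        mul_le_mul_of_nonneg_left h2 hexp1.le
    _ = (μ S).toReal * (1 - Real.exp (-1)) := mul_comm _ _
  calc (1 - Real.exp (-1)) * c / (2 * ρ) * l ^ ρ
      ≤ (μ S).toReal * (1 - Real.exp (-1)) := key
  _ ≤ ∫ r, g r ∂μ := hge

end
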